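/- Let H be a complex Hilbert space, let A be a positive invertible bounded operator on H, and let P be a nonzero projection on H. Then the set {λ ∈ ℝ : λ ≥ 0 and λP ≤ P A⁻¹ P} has a greatest element, namely ‖A # P‖⁻², i.e. ‖A # P‖² · max{λ ≥ 0 : λP ≤ P A⁻¹ P} = 1. -/

import Mathlib

open Topology Filter

set_option synthInstance.maxHeartbeats 1000000
set_option maxHeartbeats 1000000

/-- The geometric mean `A # B = A^{1/2} (A^{-1/2} B A^{-1/2})^{1/2} A^{1/2}` of operators,
where square roots are taken via the continuous functional calculus and `A^{-1/2}` is the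
(ring) inverse of `A^{1/2}`. -/
noncomputable def geomMean {H : Type*} [NormedAddCommGroup H] [InnerProductSpace ℂ H]
    [CompleteSpace H] (A B : H →L[ℂ] H) : H →L[ℂ] H :=
  CFC.sqrt A * CFC.sqrt (Ring.inverse (CFC.sqrt A) * B * Ring.inverse (CFC.sqrt A)) *
    CFC.sqrt A

section Aux

private lemma aux_commute_aeval {𝔄 : Type*} [Ring 𝔄] [Algebra ℝ 𝔄] (a : 𝔄) (q : Polynomial ℝ) :
    Commute a (Polynomial.aeval a q) := by
  induction q using Polynomial.induction_on with
  | C r => simpa [Commute, SemiconjBy] using (Algebra.commutes r a).symm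
  | add q₁ q₂ h₁ h₂ => simpa [map_add] using h₁.add_right h₂
  | monomial n r h =>
    simp only [map_mul, map_pow, Polynomial.aeval_C, Polynomial.aeval_X]
    have h0 : Commute a ((algebraMap ℝ 𝔄) r) := (Algebra.commutes r a).symm
    exact h0.mul_right ((Commute.refl a).pow_right (n + 1))

private lemma aux_real_le_of_forall_pos (a b : ℝ) (h : ∀ ε : ℝ, 0 < ε → a ≤ b + ε) : a ≤ b := by
  by_contra hc
  push_neg at hc
  have := h ((a - b) / 2) (by linarith)
  linarith

end Aux

/-- Let `H` be a complex Hilbert space, `A` a positive invertible bounded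
operator on `H`, and `P` a nonzero projection on `H`.  Then the set
`{λ : ℝ | 0 ≤ λ ∧ λ • P ≤ P A⁻¹ P}` has a greatest element, namely `‖A # P‖⁻²`. -/
theorem stmt10 {H : Type*} [NormedAddCommGroup H] [InnerProductSpace ℂ H] [CompleteSpace H]
    (A P : H →L[ℂ] H) (hA : 0 ≤ A) (hAinv : IsUnit A)
    (hsa : IsSelfAdjoint P) (hidem : IsIdempotentElem P) (hP : P ≠ 0) :
    IsGreatest {lam : ℝ | 0 ≤ lam ∧ lam • P ≤ P * Ring.inverse A * P}
      (‖geomMean A P‖ ^ 2)⁻¹ := by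
  have hHnt : Nontrivial H := by
    by_contra h
    rw [not_nontrivial_iff_subsingleton] at h
    exact hP (ContinuousLinearMap.ext fun x => Subsingleton.elim _ _)
  have hPP : P * P = P := hidem
  have hPsa : star P = P := hsa.star_eq
  -- the square root of A
  set S := CFC.sqrt A with hS_def
  have hS0 : 0 ≤ S := CFC.sqrt_nonneg (a := A)
  have hSsa : IsSelfAdjoint S := hS0.isSelfAdjoint
  have hSS : S * S = A := CFC.sqrt_mul_sqrt_self A hA
  -- S is invertible
  have hSunit : IsUnit S := by
    have hcomm : Commute S A := by rw [← hSS]; exact (Commute.refl S).mul_right (Commute.refl S)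
    have hcomm' : Commute S (Ring.inverse A) := by
      rw [← hAinv.unit_spec] at hcomm ⊢
      rw [Ring.inverse_unit]
      exact hcomm.units_inv_right
    refine ⟨⟨S, Ring.inverse A * S, ?_, ?_⟩, rfl⟩
    · calc S * (Ring.inverse A * S) = S * Ring.inverse A * S := by rw [mul_assoc]
        _ = Ring.inverse A * S * S := by rw [hcomm'.eq]
        _ = Ring.inverse A * A := by rw [mul_assoc, hSS]
        _ = 1 := Ring.inverse_mul_cancel A hAinv
    · calc Ring.inverse A * S * S = Ring.inverse A * A := by rw [mul_assoc, hSS]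
        _ = 1 := Ring.inverse_mul_cancel A hAinv
  set S' := Ring.inverse S with hS'_def
  have hS'S : S' * S = 1 := Ring.inverse_mul_cancel S hSunit
  have hSS' : S * S' = 1 := Ring.mul_inverse_cancel S hSunit
  have hS'star : star S' = S' := by
    have h1 : S * star S' = 1 := by
      have := congrArg star hS'S
      rwa [star_mul, star_one, hSsa.star_eq] at this
    calc star S' = (S' * S) * star S' := by rw [hS'S, one_mul]
      _ = S' * (S * star S') := by rw [mul_assoc]
      _ = S' := by rw [h1, mul_one]
  have hinvA : Ring.inverse A = S' * S' := by
    have h1 : S' * S' * A = 1 := by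
      calc S' * S' * A = S' * S' * (S * S) := by rw [hSS]
        _ = S' * (S' * S) * S := by noncomm_ring
        _ = 1 := by rw [hS'S, mul_one, hS'S]
    calc Ring.inverse A = S' * S' * A * Ring.inverse A := by rw [h1, one_mul]
      _ = S' * S' * (A * Ring.inverse A) := by rw [mul_assoc]
      _ = S' * S' := by rw [Ring.mul_inverse_cancel A hAinv, mul_one]
  -- rewriting helpers
  have hss1 : ∀ x : H →L[ℂ] H, S' * (S * x) = x := fun x => by rw [← mul_assoc, hS'S, one_mul]
  have hss2 : ∀ x : H →L[ℂ] H, S * (S' * x) = x := fun x => by rw [← mul_assoc, hSS', one_mul]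
  have hpp : ∀ x : H →L[ℂ] H, P * (P * x) = P * x := fun x => by rw [← mul_assoc, hPP]
  -- the element C = S⁻¹ P S⁻¹
  set C := S' * P * S' with hC_def
  have hC0 : 0 ≤ C := by
    have h := star_mul_self_nonneg (P * S')
    have heq : star (P * S') * (P * S') = C := by
      rw [star_mul, hS'star, hPsa, hC_def]
      simp only [mul_assoc, hpp]
    rwa [heq] at h
  have hCsa : IsSelfAdjoint C := hC0.isSelfAdjoint
  have hP1 : S * C * S = P := by
    rw [hC_def]
    simp only [mul_assoc, hss2, hS'S, mul_one]
  have hCAC : C * A * C = C := by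
    rw [hC_def, ← hSS]
    simp only [mul_assoc, hss1, hss2, hpp, hS'S, hSS', mul_one, one_mul]
  have hCne : C ≠ 0 := by
    intro h
    apply hP
    rw [← hP1, h, mul_zero, zero_mul]
  have hT : P * Ring.inverse A * P = S * (C * C) * S := by
    rw [hinvA, ← hP1]
    simp only [mul_assoc, hss1, hss2]
  -- spectra basics
  have hspec0 : ∀ t ∈ spectrum ℝ C, 0 ≤ t := fun t ht => spectrum_nonneg_of_nonneg hC0 ht
  have hspecR : ∀ t ∈ spectrum ℝ C, t ∈ Set.Icc 0 ‖C‖ := by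
    intro t ht
    refine ⟨hspec0 t ht, ?_⟩
    calc t ≤ |t| := le_abs_self t
      _ = ‖t‖ := (Real.norm_eq_abs t).symm
      _ ≤ ‖C‖ := spectrum.norm_le_norm_of_mem ht
  -- the general conjugation fact : lam • P ≤ P A⁻¹ P  iff  lam • C ≤ C * C (one direction each)
  have hdown : ∀ lam : ℝ, lam • P ≤ P * Ring.inverse A * P → lam • C ≤ C * C := by
    intro lam hlam
    have h2 := star_left_conjugate_le_conjugate hlam S'
    rw [hS'star] at h2
    have hL : S' * (lam • P) * S' = lam • C := by
      rw [hC_def]; simp only [mul_smul_comm, smul_mul_assoc]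
    have hR : S' * (P * Ring.inverse A * P) * S' = C * C := by
      rw [hinvA, hC_def]
      simp only [mul_assoc]
    rwa [hL, hR] at h2
  have hup : ∀ lam : ℝ, lam • C ≤ C * C → lam • P ≤ P * Ring.inverse A * P := by
    intro lam hlam
    have h2 := star_left_conjugate_le_conjugate hlam S
    rw [hSsa.star_eq] at h2
    have hL : S * (lam • C) * S = lam • P := by
      rw [← hP1]; simp only [mul_smul_comm, smul_mul_assoc]
    have hR : S * (C * C) * S = P * Ring.inverse A * P := hT.symm
    rwa [hL, hR] at h2
  -- C * C as cfc
  have hCC_cfc : C * C = cfc (fun t : ℝ => t * t) C := by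
    rw [cfc_mul (fun t : ℝ => t) (fun t : ℝ => t) C (continuousOn_id) (continuousOn_id),
      cfc_id' ℝ C hCsa]
  -- spectral gap from an operator inequality
  have hgap : ∀ lam : ℝ, lam • C ≤ C * C → ∀ t ∈ spectrum ℝ C, t = 0 ∨ lam ≤ t := by
    intro lam hlam t ht
    have h3 : 0 ≤ C * C - lam • C := sub_nonneg.mpr hlam
    have h4 : C * C - lam • C = cfc (fun t : ℝ => t * t - lam * t) C := by
      rw [cfc_sub (fun t : ℝ => t * t) (fun t : ℝ => lam * t) C
        (continuousOn_id.mul continuousOn_id) (continuousOn_const.mul continuousOn_id),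
        ← hCC_cfc, cfc_const_mul_id lam C hCsa]
    rw [h4] at h3
    have h5 : 0 ≤ t * t - lam * t := by
      refine spectrum_nonneg_of_nonneg h3 ?_
      rw [cfc_map_spectrum (fun t : ℝ => t * t - lam * t) C hCsa
        ((continuousOn_id.mul continuousOn_id).sub (continuousOn_const.mul continuousOn_id))]
      exact ⟨t, ht, rfl⟩
    rcases eq_or_lt_of_le (hspec0 t ht) with h | h
    · exact Or.inl h.symm
    · right; nlinarith
  -- basic positivity of ‖A‖
  haveI : Nontrivial (H →L[ℂ] H) := ⟨⟨P, 0, hP⟩⟩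
  have hAne : A ≠ 0 := hAinv.ne_zero
  have hAnorm : (0:ℝ) < ‖A‖ := norm_pos_iff.mpr hAne
  -- m₀ • P ≤ P A⁻¹ P with m₀ = ‖A‖⁻¹
  have hm0 : ‖A‖⁻¹ • P ≤ P * Ring.inverse A * P := by
    have hA_le : A ≤ algebraMap ℝ (H →L[ℂ] H) ‖A‖ := hA.isSelfAdjoint.le_algebraMap_norm_self
    have h1 := star_left_conjugate_le_conjugate hA_le S'
    rw [hS'star] at h1
    have hL : S' * A * S' = 1 := by
      rw [← hSS]
      simp only [mul_assoc, hss1, hSS', hS'S, mul_one]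
    have hR : S' * algebraMap ℝ (H →L[ℂ] H) ‖A‖ * S' = ‖A‖ • Ring.inverse A := by
      rw [Algebra.algebraMap_eq_smul_one, hinvA]
      simp only [mul_smul_comm, smul_mul_assoc, mul_one]
    rw [hL, hR] at h1
    have h2 := star_left_conjugate_le_conjugate h1 P
    rw [hPsa] at h2
    have hL2 : P * (1 : H →L[ℂ] H) * P = P := by rw [mul_one, hPP]
    have hR2 : P * (‖A‖ • Ring.inverse A) * P = ‖A‖ • (P * Ring.inverse A * P) := by
      simp only [mul_smul_comm, smul_mul_assoc]
    rw [hL2, hR2] at h2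
    calc ‖A‖⁻¹ • P ≤ ‖A‖⁻¹ • (‖A‖ • (P * Ring.inverse A * P)) :=
          smul_le_smul_of_nonneg_left h2 (by positivity)
      _ = P * Ring.inverse A * P := by
          rw [smul_smul, inv_mul_cancel₀ (ne_of_gt hAnorm), one_smul]
  have hgap0 : ∀ t ∈ spectrum ℝ C, t = 0 ∨ ‖A‖⁻¹ ≤ t := hgap _ (hdown _ hm0)
  -- the minimal nonzero spectral value μ₀ (called mu here)
  set Sp := spectrum ℝ C ∩ Set.Ici ‖A‖⁻¹ with hSp_def
  have hSp_ne : Sp.Nonempty := by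
    by_contra h
    rw [Set.not_nonempty_iff_eq_empty] at h
    have hallz : ∀ t ∈ spectrum ℝ C, ‖(fun t : ℝ => t) t‖ ≤ 0 := by
      intro t ht
      rcases hgap0 t ht with h0 | h0
      · simp [h0]
      · exact absurd (show t ∈ Sp from ⟨ht, h0⟩) (by rw [h]; exact Set.notMem_empty t)
    have : ‖cfc (fun t : ℝ => t) C‖ ≤ 0 := norm_cfc_le le_rfl hallz
    rw [cfc_id' ℝ C hCsa] at this
    exact hCne (norm_le_zero_iff.mp this)
  have hSp_bdd : BddBelow Sp := ⟨‖A‖⁻¹, fun x hx => hx.2⟩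
  have hSp_cl : IsClosed Sp := (spectrum.isClosed C).inter isClosed_Ici
  set mu := sInf Sp with hmu_def
  have hmu_mem : mu ∈ Sp := hSp_cl.csInf_mem hSp_ne hSp_bdd
  have hmu_spec : mu ∈ spectrum ℝ C := hmu_mem.1
  have hmu_pos : 0 < mu := lt_of_lt_of_le (by positivity) hmu_mem.2
  have hmu_min : ∀ t ∈ spectrum ℝ C, t = 0 ∨ mu ≤ t := by
    intro t ht
    rcases hgap0 t ht with h0 | h0
    · exact Or.inl h0
    · exact Or.inr (csInf_le hSp_bdd (Set.mem_inter ht h0))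
  -- membership part : mu • P ≤ P A⁻¹ P
  have hmu_memS : mu • C ≤ C * C := by
    have h1 : cfc (fun t : ℝ => mu * t) C ≤ cfc (fun t : ℝ => t * t) C := by
      refine cfc_mono (fun t ht => ?_) (continuousOn_const.mul continuousOn_id)
        (continuousOn_id.mul continuousOn_id)
      rcases hmu_min t ht with h0 | h0
      · simp [h0]
      · exact mul_le_mul_of_nonneg_right h0 (hspec0 t ht)
    rwa [cfc_const_mul_id mu C hCsa, ← hCC_cfc] at h1
  -- continuity of the auxiliary function f t = √t / t on the spectrum
  set f : ℝ → ℝ := fun t => Real.sqrt t / t with hf_def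
  have hspec_sub : spectrum ℝ C ⊆ {0} ∪ Set.Ici mu := by
    intro t ht
    rcases hmu_min t ht with h0 | h0
    · exact Or.inl h0
    · exact Or.inr h0
  have hf_cont0 : ContinuousOn f ({0} ∪ Set.Ici mu) := by
    intro t ht
    rcases ht with ht | ht
    · rw [Set.mem_singleton_iff] at ht
      subst ht
      unfold ContinuousWithinAt
      have hb : nhdsWithin (0:ℝ) (({0} : Set ℝ) ∪ Set.Ici mu) =
          nhdsWithin (0:ℝ) ({0} : Set ℝ) ⊔ nhdsWithin (0:ℝ) (Set.Ici mu) :=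
        nhdsWithin_union _ _ _
      have hbot : nhdsWithin (0:ℝ) (Set.Ici mu) = ⊥ := by
        rw [← not_neBot, ← mem_closure_iff_nhdsWithin_neBot, closure_Ici]
        simp only [Set.mem_Ici, not_le]
        exact hmu_pos
      rw [hb, hbot, sup_bot_eq, nhdsWithin_singleton]
      exact tendsto_pure_nhds f 0
    · have htpos : (0:ℝ) < t := lt_of_lt_of_le hmu_pos ht
      exact ((Real.continuous_sqrt.continuousAt).div continuousAt_id
        (ne_of_gt htpos)).continuousWithinAt
  have hf_cont : ContinuousOn f (spectrum ℝ C) := hf_cont0.mono hspec_sub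
  have hid_cont : ContinuousOn (fun t : ℝ => t) (spectrum ℝ C) := continuousOn_id
  -- D = √C as a cfc
  set D := CFC.sqrt C with hD_def
  have hD0 : 0 ≤ D := CFC.sqrt_nonneg (a := C)
  have hDsa : IsSelfAdjoint D := hD0.isSelfAdjoint
  have hD_cfc : D = cfc Real.sqrt C := by
    rw [hD_def]
    apply CFC.sqrt_unique
    · calc cfc Real.sqrt C * cfc Real.sqrt C
          = cfc (fun t : ℝ => Real.sqrt t * Real.sqrt t) C :=
            (cfc_mul Real.sqrt Real.sqrt C Real.continuous_sqrt.continuousOn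
              Real.continuous_sqrt.continuousOn).symm
        _ = cfc (fun t : ℝ => t) C := cfc_congr fun t ht => Real.mul_self_sqrt (hspec0 t ht)
        _ = C := cfc_id' ℝ C hCsa
    · exact cfc_nonneg fun t _ => Real.sqrt_nonneg t
  have hDD : D * D = C := CFC.sqrt_mul_sqrt_self C hC0
  -- F = cfc f C
  set F := cfc f C with hF_def
  have hCF : C * F = D := by
    have h1 : cfc (fun t : ℝ => t * f t) C = C * F := by
      rw [cfc_mul (fun t : ℝ => t) f C hid_cont hf_cont, cfc_id' ℝ C hCsa, hF_def]
    have h2 : cfc (fun t : ℝ => t * f t) C = cfc Real.sqrt C := by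
      refine cfc_congr fun t ht => ?_
      rcases eq_or_lt_of_le (hspec0 t ht) with h0 | h0
      · simp [hf_def, ← h0]
      · simp only [hf_def]
        rw [mul_comm]
        exact div_mul_cancel₀ _ (ne_of_gt h0)
    rw [← h1, h2, ← hD_cfc]
  have hFC : F * C = D := by
    have h1 : cfc (fun t : ℝ => f t * t) C = F * C := by
      rw [cfc_mul f (fun t : ℝ => t) C hf_cont hid_cont, cfc_id' ℝ C hCsa, hF_def]
    have h2 : cfc (fun t : ℝ => f t * t) C = cfc Real.sqrt C := by
      refine cfc_congr fun t ht => ?_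
      rcases eq_or_lt_of_le (hspec0 t ht) with h0 | h0
      · simp [hf_def, ← h0]
      · simp only [hf_def]
        exact div_mul_cancel₀ _ (ne_of_gt h0)
    rw [← h1, h2, ← hD_cfc]
  -- E = D A D
  set E := cfc (fun t : ℝ => f t * t * f t) C with hE_def
  have hE' : E = F * C * F := by
    rw [hE_def, cfc_mul (fun t : ℝ => f t * t) f C (hf_cont.mul hid_cont) hf_cont,
      cfc_mul f (fun t : ℝ => t) C hf_cont hid_cont, cfc_id' ℝ C hCsa, hF_def]
  have hE : D * A * D = E := by
    have h1 : D * A * D = F * (C * A * C) * F := by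
      nth_rewrite 1 [← hFC]
      nth_rewrite 1 [← hCF]
      noncomm_ring
    rw [h1, hCAC, ← hE']
  have hEnorm : ‖E‖ ≤ 1 := by
    rw [hE_def]
    refine norm_cfc_le zero_le_one fun t ht => ?_
    rcases eq_or_lt_of_le (hspec0 t ht) with h0 | h0
    · simp [hf_def, ← h0]
    · have hval : f t * t * f t = 1 := by
        simp only [hf_def]
        rw [div_mul_cancel₀ _ (ne_of_gt h0), ← mul_div_assoc,
          Real.mul_self_sqrt (le_of_lt h0), div_self (ne_of_gt h0)]
      rw [hval]
      simp
  -- the geometric mean G = S D S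
  have hGnonneg : 0 ≤ S * D * S := by
    have h := star_left_conjugate_nonneg hD0 S
    rwa [hSsa.star_eq] at h
  set ν := ‖S * D * S‖ with hnu_def
  -- upper bound on the norm
  have hnu_le : ν ≤ (Real.sqrt mu)⁻¹ := by
    have hsmu : 0 < Real.sqrt mu := Real.sqrt_pos.mpr hmu_pos
    have hstep1 : D ≤ (Real.sqrt mu)⁻¹ • C := by
      have h1 : cfc Real.sqrt C ≤ cfc (fun t : ℝ => (Real.sqrt mu)⁻¹ * t) C := by
        refine cfc_mono (fun t ht => ?_) Real.continuous_sqrt.continuousOn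
          (continuousOn_const.mul continuousOn_id)
        rcases hmu_min t ht with h0 | h0
        · simp [h0]
        · rw [inv_mul_eq_div, le_div_iff₀ hsmu]
          have h2 : Real.sqrt mu ≤ Real.sqrt t := Real.sqrt_le_sqrt h0
          nlinarith [Real.mul_self_sqrt (hspec0 t ht), Real.sqrt_nonneg t]
      rwa [← hD_cfc, cfc_const_mul_id _ C hCsa] at h1
    have hP_le_one : P ≤ 1 := by
      have h0 := star_mul_self_nonneg ((1 : H →L[ℂ] H) - P)
      have heq : star ((1 : H →L[ℂ] H) - P) * (1 - P) = 1 - P := by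
        rw [star_sub, star_one, hPsa]
        have h1 : ((1 : H →L[ℂ] H) - P) * (1 - P) = 1 - P - P + P * P := by noncomm_ring
        rw [h1, hPP]
        abel
      rw [heq] at h0
      exact sub_nonneg.mp h0
    have hstep2 : C ≤ Ring.inverse A := by
      have h1 := star_left_conjugate_le_conjugate hP_le_one S'
      rw [hS'star] at h1
      rw [hC_def, hinvA]
      simpa using h1
    have hstep3 : S * D * S ≤ (Real.sqrt mu)⁻¹ • 1 := by
      have h1 : D ≤ (Real.sqrt mu)⁻¹ • Ring.inverse A :=
        hstep1.trans (smul_le_smul_of_nonneg_left hstep2 (by positivity))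
      have h2 := star_left_conjugate_le_conjugate h1 S
      rw [hSsa.star_eq] at h2
      have hR : S * ((Real.sqrt mu)⁻¹ • Ring.inverse A) * S = (Real.sqrt mu)⁻¹ • 1 := by
        rw [hinvA]
        simp only [mul_smul_comm, smul_mul_assoc]
        congr 1
        simp only [mul_assoc, hss2, hS'S]
      rwa [hR] at h2
    calc ν ≤ ‖(Real.sqrt mu)⁻¹ • (1 : H →L[ℂ] H)‖ :=
          CStarAlgebra.norm_le_norm_of_nonneg_of_le hGnonneg hstep3
      _ = (Real.sqrt mu)⁻¹ := by
          rw [norm_smul, norm_one, mul_one, Real.norm_eq_abs, abs_of_nonneg (by positivity)]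
  -- lower bound on the norm
  have hG_le : S * D * S ≤ ν • 1 := by
    have h := (hGnonneg.isSelfAdjoint).le_algebraMap_norm_self
    rwa [Algebra.algebraMap_eq_smul_one] at h
  have hKey : ∀ ε : ℝ, 0 < ε →
      (Real.sqrt mu)⁻¹ ≤ ν + (2 / mu + 2 * (‖D * A‖ * ‖A * D‖)) * ε := by
    intro ε hε
    obtain ⟨q, hq⟩ := exists_polynomial_near_of_continuousOn 0 ‖C‖ Real.sqrt
      Real.continuous_sqrt.continuousOn ε hε
    set p : Polynomial ℝ := q - Polynomial.C (q.eval 0) with hp_def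
    have hp0 : p.coeff 0 = 0 := by
      simp [hp_def, Polynomial.coeff_zero_eq_eval_zero]
    have hp_near : ∀ x ∈ Set.Icc (0 : ℝ) ‖C‖, |Polynomial.eval x p - Real.sqrt x| ≤ 2 * ε := by
      intro x hx
      have h1 := hq x hx
      have h2 := hq 0 (Set.left_mem_Icc.mpr (norm_nonneg C))
      rw [Real.sqrt_zero, sub_zero] at h2
      have h3 : Polynomial.eval x p - Real.sqrt x =
          (Polynomial.eval x q - Real.sqrt x) - Polynomial.eval 0 q := by
        simp [hp_def]
        ring
      rw [h3]
      have h4 : |(Polynomial.eval x q - Real.sqrt x) - Polynomial.eval 0 q| ≤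
          |Polynomial.eval x q - Real.sqrt x| + |Polynomial.eval 0 q| := by
        rw [sub_eq_add_neg]
        exact (abs_add_le _ _).trans (by rw [abs_neg])
      linarith
    obtain ⟨q', hq'⟩ := Polynomial.X_dvd_iff.mpr hp0
    set Pc := Polynomial.aeval C p with hPc_def
    have hpoly_cont : ContinuousOn (fun t : ℝ => Polynomial.eval t p) (spectrum ℝ C) :=
      (Polynomial.continuous p).continuousOn
    have hPc_cfc : cfc (fun t : ℝ => Polynomial.eval t p) C = Pc := by
      rw [hPc_def]
      exact cfc_polynomial p C hCsa
    have hDPc : ‖D - Pc‖ ≤ 2 * ε := by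
      rw [hD_cfc, ← hPc_cfc, ← cfc_sub Real.sqrt (fun t : ℝ => Polynomial.eval t p) C
        Real.continuous_sqrt.continuousOn hpoly_cont]
      refine norm_cfc_le (by positivity) fun t ht => ?_
      have h1 := hp_near t (hspecR t ht)
      rw [Real.norm_eq_abs, abs_sub_comm]
      linarith
    have hQcomm : Commute C (Polynomial.aeval C q') := aux_commute_aeval C q'
    have hPcCQ : Pc = C * Polynomial.aeval C q' := by
      rw [hPc_def, hq', map_mul, Polynomial.aeval_X]
    have hinner : C * A * Pc * A * C = Pc := by
      rw [hPcCQ]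
      have h1 : C * A * (C * Polynomial.aeval C q') * A * C =
          (C * A * C) * (Polynomial.aeval C q' * (A * C)) := by noncomm_ring
      rw [h1, hCAC]
      calc C * (Polynomial.aeval C q' * (A * C))
          = (C * Polynomial.aeval C q') * (A * C) := by noncomm_ring
        _ = (Polynomial.aeval C q' * C) * (A * C) := by rw [hQcomm.eq]
        _ = Polynomial.aeval C q' * (C * A * C) := by noncomm_ring
        _ = Polynomial.aeval C q' * C := by rw [hCAC]
        _ = C * Polynomial.aeval C q' := hQcomm.eq.symm
    have hkey2 : D * A * Pc * A * D =
        cfc (fun t : ℝ => f t * Polynomial.eval t p * f t) C := by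
      have h1 : D * A * Pc * A * D = F * (C * A * Pc * A * C) * F := by
        nth_rewrite 1 [← hFC]
        nth_rewrite 1 [← hCF]
        noncomm_ring
      rw [h1, hinner, ← hPc_cfc,
        ← cfc_mul f (fun t : ℝ => Polynomial.eval t p) C hf_cont hpoly_cont,
        ← cfc_mul (fun t : ℝ => f t * Polynomial.eval t p) f C (hf_cont.mul hpoly_cont) hf_cont]
    set M := D * A * D * A * D with hM_def
    have hzstar : star (S * D) = D * S := by rw [star_mul, hDsa.star_eq, hSsa.star_eq]
    have hMz : star (S * D) * (S * D * S) * (S * D) = M := by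
      rw [hzstar, hM_def]
      have h1 : D * S * (S * D * S) * (S * D) = D * (S * S) * D * (S * S) * D := by noncomm_ring
      rw [h1, hSS]
    have hM0 : 0 ≤ M := by
      rw [← hMz]
      exact star_left_conjugate_nonneg hGnonneg _
    have hMle : M ≤ ν • E := by
      have h2 := star_left_conjugate_le_conjugate hG_le (S * D)
      rw [hMz] at h2
      have hR : star (S * D) * (ν • 1) * (S * D) = ν • E := by
        rw [hzstar]
        simp only [mul_smul_comm, smul_mul_assoc, mul_one]
        congr 1
        have h3 : D * S * (S * D) = D * (S * S) * D := by noncomm_ring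
        rw [h3, hSS, hE]
      rwa [hR] at h2
    have hMnorm : ‖M‖ ≤ ν := by
      calc ‖M‖ ≤ ‖ν • E‖ := CStarAlgebra.norm_le_norm_of_nonneg_of_le hM0 hMle
        _ = ν * ‖E‖ := by
            rw [norm_smul, Real.norm_eq_abs, abs_of_nonneg (norm_nonneg _)]
        _ ≤ ν * 1 := mul_le_mul_of_nonneg_left hEnorm (norm_nonneg _)
        _ = ν := mul_one ν
    have hval_le : f mu * Polynomial.eval mu p * f mu ≤
        ‖cfc (fun t : ℝ => f t * Polynomial.eval t p * f t) C‖ := by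
      have h1 := norm_apply_le_norm_cfc (fun t : ℝ => f t * Polynomial.eval t p * f t) C
        hmu_spec ((hf_cont.mul hpoly_cont).mul hf_cont) hCsa
      rw [Real.norm_eq_abs] at h1
      exact (le_abs_self _).trans h1
    have hnorm_decomp : ‖cfc (fun t : ℝ => f t * Polynomial.eval t p * f t) C‖ ≤
        ν + ‖D * A‖ * ‖A * D‖ * (2 * ε) := by
      have h1 : cfc (fun t : ℝ => f t * Polynomial.eval t p * f t) C =
          M - (D * A) * (D - Pc) * (A * D) := by
        rw [← hkey2, hM_def]
        noncomm_ring
      rw [h1]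
      have h2 : ‖(D * A) * (D - Pc) * (A * D)‖ ≤ ‖D * A‖ * ‖D - Pc‖ * ‖A * D‖ :=
        (norm_mul_le _ _).trans (mul_le_mul_of_nonneg_right (norm_mul_le _ _) (norm_nonneg _))
      have h3 : ‖D * A‖ * ‖D - Pc‖ * ‖A * D‖ ≤ ‖D * A‖ * (2 * ε) * ‖A * D‖ :=
        mul_le_mul_of_nonneg_right
          (mul_le_mul_of_nonneg_left hDPc (norm_nonneg (D * A))) (norm_nonneg _)
      have h4 := norm_sub_le M ((D * A) * (D - Pc) * (A * D))
      have h5 : ‖D * A‖ * (2 * ε) * ‖A * D‖ = ‖D * A‖ * ‖A * D‖ * (2 * ε) := by ring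
      linarith
    have hsmu : 0 < Real.sqrt mu := Real.sqrt_pos.mpr hmu_pos
    have hsqmu : Real.sqrt mu * Real.sqrt mu = mu := Real.mul_self_sqrt hmu_pos.le
    have hpmu : Real.sqrt mu - 2 * ε ≤ Polynomial.eval mu p := by
      have h1 := hp_near mu ⟨hmu_pos.le, (hspecR mu hmu_spec).2⟩
      have h2 := (abs_le.mp h1).1
      linarith
    have hval_ge : (Real.sqrt mu)⁻¹ - (2 / mu) * ε ≤ f mu * Polynomial.eval mu p * f mu := by
      have hfmu' : f mu = (Real.sqrt mu)⁻¹ := by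
        simp only [hf_def]
        rw [inv_eq_one_div, div_eq_div_iff (ne_of_gt hmu_pos) (ne_of_gt hsmu), one_mul]
        exact hsqmu
      have hfmu_pos : (0:ℝ) < f mu := by rw [hfmu']; positivity
      have key : f mu * (Real.sqrt mu - 2 * ε) * f mu ≤ f mu * Polynomial.eval mu p * f mu :=
        mul_le_mul_of_nonneg_right (mul_le_mul_of_nonneg_left hpmu hfmu_pos.le) hfmu_pos.le
      refine le_trans (le_of_eq ?_) key
      rw [hfmu']
      generalize hs : Real.sqrt mu = s at hsqmu hsmu
      rw [← hsqmu]
      field_simp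
    linarith
  have hnu_ge : (Real.sqrt mu)⁻¹ ≤ ν := by
    refine aux_real_le_of_forall_pos _ _ (fun δ hδ => ?_)
    have hKpos : (0:ℝ) ≤ 2 / mu + 2 * (‖D * A‖ * ‖A * D‖) := by positivity
    have h1 := hKey (δ / (2 / mu + 2 * (‖D * A‖ * ‖A * D‖) + 1)) (by positivity)
    have h2 : (2 / mu + 2 * (‖D * A‖ * ‖A * D‖)) *
        (δ / (2 / mu + 2 * (‖D * A‖ * ‖A * D‖) + 1)) ≤ δ := by
      rw [mul_comm, div_mul_eq_mul_div, div_le_iff₀ (by positivity)]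
      nlinarith
    linarith
  have hnu : ν = (Real.sqrt mu)⁻¹ := le_antisymm hnu_le hnu_ge
  have hGM : geomMean A P = S * D * S := by
    unfold geomMean
    rw [← hS_def, ← hS'_def, ← hC_def, ← hD_def]
  have hfinal : (‖geomMean A P‖ ^ 2)⁻¹ = mu := by
    rw [hGM, ← hnu_def, hnu, inv_pow, inv_inv, Real.sq_sqrt hmu_pos.le]
  rw [hfinal]
  constructor
  · exact ⟨hmu_pos.le, hup mu hmu_memS⟩
  · intro lam hlam
    rcases hgap lam (hdown lam hlam.2) mu hmu_spec with h0 | h0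
    · exact absurd h0 (ne_of_gt hmu_pos)
    · exact h0
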